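/- arXiv:2001.01153 — 3 statements merged into one kernel-verified Lean document; each statement's English description precedes it below -/
import Mathlib

section
/- Let A, R, P, S be d×d real matrices with R and P symmetric, and suppose S solves the Lyapunov equation (A - RP)S + S(A - RP)^T = R, and P solves the Riccati equation PA + A^T P - PRP + Q = 0 for a symmetric matrix Q. Let B = A - RP and let T be the 2d×2d block matrix [[I, S],[P, PS + I]]. Then T is invertible and T^{-1} · [[A, -R],[-Q, -A^T]] · T = [[B, 0],[0, -B^T]]. -/
open Matrix

theorem lyapunov_riccati_block_diagonalization
    (d : ℕ) (A R P Q S : Matrix (Fin d) (Fin d) ℝ)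
    (hR : Rᵀ = R) (hP : Pᵀ = P) (hQ : Qᵀ = Q)
    (hLyap : (A - R * P) * S + S * (A - R * P)ᵀ = R)
    (hRic : P * A + Aᵀ * P - P * R * P + Q = 0)
    (B : Matrix (Fin d) (Fin d) ℝ) (hB : B = A - R * P)
    (T : Matrix (Fin d ⊕ Fin d) (Fin d ⊕ Fin d) ℝ)
    (hT : T = Matrix.fromBlocks 1 S P (P * S + 1)) :
    IsUnit T ∧
      T⁻¹ * Matrix.fromBlocks A (-R) (-Q) (-Aᵀ) * T =
        Matrix.fromBlocks B 0 0 (-Bᵀ) := by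
  have hLyap' : (A - R * P) * S + S * (Aᵀ - P * R) = R := by
    have h : (A - R * P)ᵀ = Aᵀ - P * R := by
      rw [transpose_sub, transpose_mul, hP, hR]
    rw [← h]; exact hLyap
  set U : Matrix (Fin d ⊕ Fin d) (Fin d ⊕ Fin d) ℝ :=
    Matrix.fromBlocks (1 + S * P) (-S) (-P) 1 with hU
  have hTU : T * U = 1 := by
    rw [hT, hU, fromBlocks_multiply, ← fromBlocks_one]
    rw [show (1 : Matrix (Fin d) (Fin d) ℝ) * (1 + S * P) + S * -P = 1 by noncomm_ring,
      show (1 : Matrix (Fin d) (Fin d) ℝ) * -S + S * 1 = 0 by noncomm_ring,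
      show P * (1 + S * P) + (P * S + 1) * -P = 0 by noncomm_ring,
      show P * -S + (P * S + 1) * 1 = 1 by noncomm_ring]
  have hUT : U * T = 1 := by
    rw [hT, hU, fromBlocks_multiply, ← fromBlocks_one]
    rw [show (1 + S * P) * 1 + -S * P = 1 by noncomm_ring,
      show (1 + S * P) * S + -S * (P * S + 1) = 0 by noncomm_ring,
      show -P * 1 + (1 : Matrix (Fin d) (Fin d) ℝ) * P = 0 by noncomm_ring,
      show -P * S + (1 : Matrix (Fin d) (Fin d) ℝ) * (P * S + 1) = 1 by noncomm_ring]
  have hInvertible : Invertible T := ⟨U, hUT, hTU⟩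
  have hUnit : IsUnit T := isUnit_of_invertible T
  have hInv : T⁻¹ = U := inv_eq_right_inv hTU
  refine ⟨hUnit, ?_⟩
  rw [hInv, hT, hU, fromBlocks_multiply, fromBlocks_multiply]
  have e11 : ((1 + S * P) * A + -S * -Q) * 1 + ((1 + S * P) * -R + -S * -Aᵀ) * P = B := by
    rw [← sub_eq_zero]
    have h : ((1 + S * P) * A + -S * -Q) * 1 + ((1 + S * P) * -R + -S * -Aᵀ) * P - B
        = S * (P * A + Aᵀ * P - P * R * P + Q) := by
      rw [hB]; noncomm_ring
    rw [h, hRic, mul_zero]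
  have e12 : ((1 + S * P) * A + -S * -Q) * S + ((1 + S * P) * -R + -S * -Aᵀ) * (P * S + 1)
      = 0 := by
    rw [← sub_eq_zero, sub_zero]
    have h : ((1 + S * P) * A + -S * -Q) * S + ((1 + S * P) * -R + -S * -Aᵀ) * (P * S + 1)
        = S * (P * A + Aᵀ * P - P * R * P + Q) * S
          + ((A - R * P) * S + S * (Aᵀ - P * R) - R) := by
      noncomm_ring
    rw [h, hRic, hLyap', mul_zero, zero_mul, sub_self, add_zero]
  have e21 : (-P * A + 1 * -Q) * 1 + (-P * -R + 1 * -Aᵀ) * P = 0 := by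
    rw [← sub_eq_zero, sub_zero]
    have h : (-P * A + 1 * -Q) * 1 + (-P * -R + 1 * -Aᵀ) * P
        = -(P * A + Aᵀ * P - P * R * P + Q) := by
      noncomm_ring
    rw [h, hRic, neg_zero]
  have e22 : (-P * A + 1 * -Q) * S + (-P * -R + 1 * -Aᵀ) * (P * S + 1) = -Bᵀ := by
    rw [← sub_eq_zero]
    have hBt : Bᵀ = Aᵀ - P * R := by
      rw [hB, transpose_sub, transpose_mul, hP, hR]
    have h : (-P * A + 1 * -Q) * S + (-P * -R + 1 * -Aᵀ) * (P * S + 1) - -Bᵀ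
        = -((P * A + Aᵀ * P - P * R * P + Q) * S) := by
      rw [hBt]; noncomm_ring
    rw [h, hRic, zero_mul, neg_zero]
  rw [e11, e12, e21, e22]
end

section
/- Let a, b, M > 0, ξ > 0 with ξ ≤ 3b/(16a²M), c₀ = aM/(3b), and let ᾱ, β̄ be as in the fixed point solution (with g = 3b/(32aM) - (a/4)ξ): ᾱ = (3a²ξ²/16)/(g + √(g² - a²ξ²/16)) + aξ and β̄ = (a²ξ²/16)/(g + √(g² - a²ξ²/16)). Define α_0 = aξ, β_0 = 0, α_{k+1} = 3c₀(α_k + β_k)² + aξ, β_{k+1} = c₀(α_k + β_k)². Then α_k ≤ ᾱ and β_k ≤ β̄ for all k ≥ 0. -/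
theorem iterates_bounded_by_fixed_point
    (a b M ξ c₀ g αbar βbar : ℝ) (ha : 0 < a) (hb : 0 < b) (hM : 0 < M) (hξ : 0 < ξ)
    (hξle : ξ ≤ 3 * b / (16 * a ^ 2 * M))
    (hc₀ : c₀ = a * M / (3 * b))
    (hg : g = 3 * b / (32 * a * M) - a / 4 * ξ)
    (hαbar : αbar = 3 * a ^ 2 * ξ ^ 2 / 16 / (g + Real.sqrt (g ^ 2 - a ^ 2 / 16 * ξ ^ 2)) + a * ξ)
    (hβbar : βbar = a ^ 2 * ξ ^ 2 / 16 / (g + Real.sqrt (g ^ 2 - a ^ 2 / 16 * ξ ^ 2)))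
    (α β : ℕ → ℝ) (hα0 : α 0 = a * ξ) (hβ0 : β 0 = 0)
    (hα : ∀ k, α (k + 1) = 3 * c₀ * (α k + β k) ^ 2 + a * ξ)
    (hβ : ∀ k, β (k + 1) = c₀ * (α k + β k) ^ 2) :
    ∀ k, α k ≤ αbar ∧ β k ≤ βbar := by
  set s := Real.sqrt (g ^ 2 - a ^ 2 / 16 * ξ ^ 2) with hs_def
  have hc₀pos : 0 < c₀ := by
    rw [hc₀]; positivity
  have hgge : a / 4 * ξ ≤ g := by
    rw [hg]
    have h1 : a / 2 * ξ ≤ a / 2 * (3 * b / (16 * a ^ 2 * M)) := by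
      apply mul_le_mul_of_nonneg_left hξle (by positivity)
    have h2 : a / 2 * (3 * b / (16 * a ^ 2 * M)) = 3 * b / (32 * a * M) := by
      field_simp; ring
    nlinarith
  have hgpos : 0 < g := lt_of_lt_of_le (by positivity) hgge
  have hD : 0 ≤ g ^ 2 - a ^ 2 / 16 * ξ ^ 2 := by
    have h := mul_le_mul hgge hgge (by positivity) hgpos.le
    nlinarith
  have hs2 : s ^ 2 = g ^ 2 - a ^ 2 / 16 * ξ ^ 2 := Real.sq_sqrt hD
  have hs_nonneg : 0 ≤ s := Real.sqrt_nonneg _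
  have hsg : s ≤ g := by nlinarith
  have hgs_pos : 0 < g + s := by linarith
  have hβ_eq : βbar = g - s := by
    have key : (g - s) * (g + s) = a ^ 2 * ξ ^ 2 / 16 := by linear_combination -hs2
    rw [hβbar, div_div, div_eq_iff (by positivity : (16 : ℝ) * (g + s) ≠ 0)]
    linear_combination 16 * hs2
  have hα_eq : αbar = 3 * βbar + a * ξ := by
    rw [hαbar, hβbar]; ring
  have hcg : c₀ * (32 * g + 8 * a * ξ) = 1 := by
    rw [hc₀, hg]
    field_simp
    ring
  have hfix : c₀ * (4 * βbar + a * ξ) ^ 2 = βbar := by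
    rw [hβ_eq]
    linear_combination (16 * c₀) * hs2 + (g - s) * hcg
  have hβbar_nonneg : 0 ≤ βbar := by rw [hβ_eq]; linarith
  have hsum_eq : αbar + βbar = 4 * βbar + a * ξ := by rw [hα_eq]; ring
  have main : ∀ k, 0 ≤ α k ∧ 0 ≤ β k ∧ α k ≤ αbar ∧ β k ≤ βbar := by
    intro k
    induction k with
    | zero =>
      refine ⟨by rw [hα0]; positivity, by rw [hβ0], ?_, by rw [hβ0]; exact hβbar_nonneg⟩
      rw [hα0, hα_eq]; nlinarith
    | succ n ih =>
      obtain ⟨hαn, hβn, hαle, hβle⟩ := ih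
      have hsum_nonneg : 0 ≤ α n + β n := by linarith
      have hsum_le : α n + β n ≤ αbar + βbar := by linarith
      have hsq : (α n + β n) ^ 2 ≤ (αbar + βbar) ^ 2 := pow_le_pow_left₀ hsum_nonneg hsum_le 2
      have hβstep : β (n + 1) ≤ βbar := by
        rw [hβ, ← hfix, ← hsum_eq]
        exact mul_le_mul_of_nonneg_left hsq hc₀pos.le
      have hαstep : α (n + 1) ≤ αbar := by
        rw [hα, hα_eq]
        have : c₀ * (α n + β n) ^ 2 ≤ βbar := by
          rw [← hfix, ← hsum_eq]
          exact mul_le_mul_of_nonneg_left hsq hc₀pos.le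
        linarith
      refine ⟨?_, ?_, hαstep, hβstep⟩
      · rw [hα]; positivity
      · rw [hβ]; positivity
  intro k
  exact ⟨(main k).2.2.1, (main k).2.2.2⟩
end

section
/- Let a, b, M > 0, ξ ∈ ℝ^d with |ξ| ≤ 3b/(16a²M), and let B be a d×d matrix with ‖e^{Bt}‖ ≤ a e^{-bt} for t ≥ 0. Suppose x_k, y_k : [0,∞) → ℝ^d are continuous with |x_k(t)| ≤ ᾱ e^{-bt} and |y_k(t)| ≤ β̄ e^{-2bt}, where ᾱ + β̄ ≤ (3/8)·b/(aM), and suppose n_s satisfies |n_s(x,y)| ≤ M(|x|+|y|)² (taking n_s(0,0)=0 and the quadratic Lipschitz bound). Define x_{k+1}(t) = e^{Bt}ξ + ∫_0^t e^{B(t-s)} n_s(x_k(s), y_k(s)) ds. Then |x_{k+1}(t)| ≤ [ (aM/b)(ᾱ+β̄)² + a|ξ| ] e^{-bt} for all t ≥ 0. -/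
open Matrix

theorem stable_iterate_x_bound
    (d : ℕ) (a b M αbar βbar : ℝ) (ha : 0 < a) (hb : 0 < b) (hM : 0 < M)
    (ξ : EuclideanSpace ℝ (Fin d)) (hξ : ‖ξ‖ ≤ 3 * b / (16 * a ^ 2 * M))
    (B : Matrix (Fin d) (Fin d) ℝ)
    (hBnorm : ∀ t : ℝ, 0 ≤ t →
      ‖(Matrix.toEuclideanCLM (𝕜 := ℝ) (NormedSpace.exp (t • B)) :
          EuclideanSpace ℝ (Fin d) →L[ℝ] EuclideanSpace ℝ (Fin d))‖ ≤ a * Real.exp (-b * t))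
    (xk yk : ℝ → EuclideanSpace ℝ (Fin d))
    (hxkc : Continuous xk) (hykc : Continuous yk)
    (hxk : ∀ t : ℝ, 0 ≤ t → ‖xk t‖ ≤ αbar * Real.exp (-b * t))
    (hyk : ∀ t : ℝ, 0 ≤ t → ‖yk t‖ ≤ βbar * Real.exp (-2 * b * t))
    (hαβ : 0 ≤ αbar ∧ 0 ≤ βbar ∧ αbar + βbar ≤ 3 / 8 * (b / (a * M)))
    (ns : EuclideanSpace ℝ (Fin d) → EuclideanSpace ℝ (Fin d) → EuclideanSpace ℝ (Fin d))
    (hns : ∀ x y, ‖ns x y‖ ≤ M * (‖x‖ + ‖y‖) ^ 2)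
    (xk1 : ℝ → EuclideanSpace ℝ (Fin d))
    (hxk1 : ∀ t : ℝ, xk1 t =
      Matrix.toEuclideanCLM (𝕜 := ℝ) (NormedSpace.exp (t • B)) ξ +
        ∫ s in (0 : ℝ)..t,
          Matrix.toEuclideanCLM (𝕜 := ℝ) (NormedSpace.exp ((t - s) • B))
            (ns (xk s) (yk s))) :
    ∀ t : ℝ, 0 ≤ t →
      ‖xk1 t‖ ≤ (a * M / b * (αbar + βbar) ^ 2 + a * ‖ξ‖) * Real.exp (-b * t) := by
  obtain ⟨hα, hβ, _⟩ := hαβ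
  intro t ht
  rw [hxk1 t]
  set C : ℝ := a * M * (αbar + βbar) ^ 2 * Real.exp (-b * t) with hC
  have hCnn : 0 ≤ C := by positivity
  have hterm1 : ‖Matrix.toEuclideanCLM (𝕜 := ℝ) (NormedSpace.exp (t • B)) ξ‖ ≤
      a * Real.exp (-b * t) * ‖ξ‖ :=
    le_trans (ContinuousLinearMap.le_opNorm _ _)
      (mul_le_mul_of_nonneg_right (hBnorm t ht) (norm_nonneg _))
  have hgint : IntervalIntegrable (fun s => C * Real.exp (-b * s))
      MeasureTheory.volume 0 t :=
    Continuous.intervalIntegrable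
      (continuous_const.mul (Real.continuous_exp.comp (continuous_const.mul continuous_id))) 0 t
  have hptwise : ∀ s ∈ Set.uIoc (0 : ℝ) t,
      ‖Matrix.toEuclideanCLM (𝕜 := ℝ) (NormedSpace.exp ((t - s) • B))
        (ns (xk s) (yk s))‖ ≤ C * Real.exp (-b * s) := by
    intro s hs
    rw [Set.uIoc_of_le ht] at hs
    have hs0 : 0 ≤ s := le_of_lt hs.1
    have hst : s ≤ t := hs.2
    have h1 : ‖Matrix.toEuclideanCLM (𝕜 := ℝ) (NormedSpace.exp ((t - s) • B))
        (ns (xk s) (yk s))‖ ≤ a * Real.exp (-b * (t - s)) * ‖ns (xk s) (yk s)‖ :=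
      le_trans (ContinuousLinearMap.le_opNorm _ _)
        (mul_le_mul_of_nonneg_right (hBnorm (t - s) (by linarith)) (norm_nonneg _))
    have h2 : ‖ns (xk s) (yk s)‖ ≤ M * ((αbar + βbar) * Real.exp (-b * s)) ^ 2 := by
      refine le_trans (hns _ _) ?_
      have hx := hxk s hs0
      have hy := hyk s hs0
      have he : Real.exp (-2 * b * s) ≤ Real.exp (-b * s) := by
        apply Real.exp_le_exp.2; nlinarith
      have hsum : ‖xk s‖ + ‖yk s‖ ≤ (αbar + βbar) * Real.exp (-b * s) := by
        have : βbar * Real.exp (-2 * b * s) ≤ βbar * Real.exp (-b * s) :=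
          mul_le_mul_of_nonneg_left he hβ
        nlinarith
      have hnn : 0 ≤ ‖xk s‖ + ‖yk s‖ := by positivity
      exact mul_le_mul_of_nonneg_left (pow_le_pow_left₀ hnn hsum 2) (le_of_lt hM)
    have hee : Real.exp (-b * (t - s)) * Real.exp (-b * s) ^ 2 =
        Real.exp (-b * t) * Real.exp (-b * s) := by
      rw [sq, ← Real.exp_add, ← Real.exp_add, ← Real.exp_add]
      ring_nf
    calc ‖Matrix.toEuclideanCLM (𝕜 := ℝ) (NormedSpace.exp ((t - s) • B))
          (ns (xk s) (yk s))‖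
        ≤ a * Real.exp (-b * (t - s)) * (M * ((αbar + βbar) * Real.exp (-b * s)) ^ 2) :=
          h1.trans (mul_le_mul_of_nonneg_left h2 (by positivity))
      _ = C * Real.exp (-b * s) := by
          rw [hC]
          linear_combination a * M * (αbar + βbar) ^ 2 * hee
  have hexp : Real.exp (-b * t) ≤ 1 := Real.exp_le_one_iff.2 (by nlinarith)
  have hterm2 : ‖∫ s in (0 : ℝ)..t,
      Matrix.toEuclideanCLM (𝕜 := ℝ) (NormedSpace.exp ((t - s) • B))
        (ns (xk s) (yk s))‖ ≤ C / b := by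
    have hI : (∫ s in (0 : ℝ)..t, C * Real.exp (-b * s)) =
        C * ((1 - Real.exp (-b * t)) / b) := by
      rw [intervalIntegral.integral_const_mul]
      have h0 : (∫ s in (0 : ℝ)..t, Real.exp (-b * s)) =
          (-b)⁻¹ • ∫ x in (-b * 0)..(-b * t), Real.exp x :=
        intervalIntegral.integral_comp_mul_left Real.exp (by nlinarith : (-b) ≠ 0)
      rw [h0, integral_exp, smul_eq_mul, mul_zero, Real.exp_zero, inv_neg, div_eq_mul_inv]
      ring
    have hae : ∀ᵐ s ∂(MeasureTheory.volume.restrict (Set.uIoc (0:ℝ) t)),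
        ‖Matrix.toEuclideanCLM (𝕜 := ℝ) (NormedSpace.exp ((t - s) • B))
          (ns (xk s) (yk s))‖ ≤ C * Real.exp (-b * s) :=
      MeasureTheory.ae_restrict_of_forall_mem measurableSet_uIoc hptwise
    refine (intervalIntegral.norm_integral_le_abs_of_norm_le hae hgint).trans ?_
    rw [hI, abs_of_nonneg (mul_nonneg hCnn (div_nonneg (by linarith) hb.le))]
    calc C * ((1 - Real.exp (-b * t)) / b) ≤ C * (1 / b) := by
          refine mul_le_mul_of_nonneg_left ?_ hCnn
          rw [div_le_div_iff₀ hb hb]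
          nlinarith [Real.exp_pos (-b * t)]
      _ = C / b := by ring
  calc ‖Matrix.toEuclideanCLM (𝕜 := ℝ) (NormedSpace.exp (t • B)) ξ +
        ∫ s in (0 : ℝ)..t, Matrix.toEuclideanCLM (𝕜 := ℝ)
          (NormedSpace.exp ((t - s) • B)) (ns (xk s) (yk s))‖
      ≤ a * Real.exp (-b * t) * ‖ξ‖ + C / b :=
        (norm_add_le _ _).trans (add_le_add hterm1 hterm2)
    _ ≤ (a * M / b * (αbar + βbar) ^ 2 + a * ‖ξ‖) * Real.exp (-b * t) := by
        rw [hC]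
        apply le_of_eq
        field_simp
        ring
end
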